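/- For all x > 0 and τ > 0, K_{iτ}(x)² = 2 ∫_1^∞ K_{2iτ}(2xy) (y²-1)^{-1/2} dy. -/

import Mathlib

open Real MeasureTheory

/-- Macdonald function with purely imaginary index. -/
noncomputable def Kit (τ x : ℝ) : ℝ :=
  ∫ t in Set.Ioi (0:ℝ), Real.exp (-x * Real.cosh t) * Real.cos (τ * t)

open Set

lemma abs_le_cosh (t : ℝ) : |t| ≤ Real.cosh t := by
  rcases abs_cases t with ⟨h, _⟩ | ⟨h, ht⟩
  · rw [h]
    calc t ≤ Real.sinh t := by
          rcases le_or_gt 0 t with h0 | h0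
          · exact (Real.self_le_sinh_iff.2 h0)
          · nlinarith [Real.sinh_neg_iff (x := t) |>.2 h0, h, abs_nonneg t, abs_of_neg h0]
      _ ≤ Real.cosh t := (Real.sinh_lt_cosh t).le
  · rw [h, ← Real.cosh_neg]
    calc -t ≤ Real.sinh (-t) := Real.self_le_sinh_iff.2 (by linarith)
      _ ≤ Real.cosh (-t) := (Real.sinh_lt_cosh _).le

lemma integrable_exp_neg_cosh {c : ℝ} (hc : 0 < c) :
    Integrable (fun t : ℝ => Real.exp (-c * Real.cosh t)) := by
  have h1 : IntegrableOn (fun t : ℝ => Real.exp (-c * t)) (Ioi 0) :=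
    exp_neg_integrableOn_Ioi 0 hc
  have habs : Integrable (fun t : ℝ => Real.exp (-c * |t|)) := by
    have h2 : IntegrableOn (fun t : ℝ => Real.exp (-c * |t|)) (Ioi 0) := by
      apply h1.congr_fun _ measurableSet_Ioi
      intro t ht; simp [abs_of_pos (mem_Ioi.1 ht)]
    have h3 : IntegrableOn (fun t : ℝ => Real.exp (-c * |t|)) (Iio 0) := by
      have h4 := (Measure.measurePreserving_neg (volume : Measure ℝ)).integrableOn_comp_preimage
        (Homeomorph.neg ℝ).measurableEmbedding |>.2 h2
      have he : ((fun t : ℝ => Real.exp (-c * |t|)) ∘ Neg.neg) = fun t : ℝ => Real.exp (-c * |t|) := by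
        ext t; simp
      have hs : (Neg.neg ⁻¹' Ioi (0:ℝ)) = Iio 0 := by ext t; simp
      rwa [he, hs] at h4
    have h5 : IntegrableOn (fun t : ℝ => Real.exp (-c * |t|)) (Iio 0 ∪ Ioi 0) := h3.union h2
    rw [← integrableOn_univ]
    apply h5.congr_set_ae
    rw [Iio_union_Ioi]
    symm
    refine (ae_eq_univ).2 ?_
    simp [compl_compl]
  apply habs.mono
  · exact (Real.continuous_exp.comp (continuous_const.mul Real.continuous_cosh)).aestronglyMeasurable
  · refine Filter.Eventually.of_forall fun t => ?_
    simp only [Real.norm_eq_abs, Real.abs_exp]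
    exact Real.exp_le_exp.2 (by nlinarith [abs_le_cosh t])

lemma integrable_kern {c : ℝ} (hc : 0 < c) (a : ℝ) :
    Integrable (fun t : ℝ => Real.exp (-c * Real.cosh t) * Real.cos (a * t)) := by
  apply (integrable_exp_neg_cosh hc).mono
  · exact ((Real.continuous_exp.comp (continuous_const.mul Real.continuous_cosh)).mul
      (Real.continuous_cos.comp (continuous_const.mul continuous_id))).aestronglyMeasurable
  · refine Filter.Eventually.of_forall fun t => ?_
    simp only [Real.norm_eq_abs, Real.abs_exp, abs_mul]
    calc Real.exp (-c * Real.cosh t) * |Real.cos (a * t)|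
        ≤ Real.exp (-c * Real.cosh t) * 1 := by
          gcongr; exact Real.abs_cos_le_one _
      _ = Real.exp (-c * Real.cosh t) := mul_one _

lemma cosh_image : Real.cosh '' (Set.Ioi 0) = Set.Ioi (1:ℝ) := by
  ext y
  constructor
  · rintro ⟨u, hu, rfl⟩
    exact Real.one_lt_cosh.2 (ne_of_gt (Set.mem_Ioi.1 hu))
  · intro hy
    have hy1 : 1 < y := hy
    have hs : Real.sqrt (y^2 - 1) ^ 2 = y^2 - 1 := Real.sq_sqrt (by nlinarith)
    have hsnn : 0 ≤ Real.sqrt (y^2-1) := Real.sqrt_nonneg _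
    set a := y + Real.sqrt (y^2 - 1) with ha
    have ha1 : 1 < a := by nlinarith
    refine ⟨Real.log a, Set.mem_Ioi.2 (Real.log_pos ha1), ?_⟩
    have ha0 : (0:ℝ) < a := by linarith
    have hainv : a⁻¹ = y - Real.sqrt (y^2-1) := by
      exact inv_eq_of_mul_eq_one_right (by nlinarith)
    rw [Real.cosh_eq, Real.exp_log ha0, Real.exp_neg, Real.exp_log ha0, hainv]
    nlinarith

noncomputable def Lmap : (ℝ × ℝ) →L[ℝ] (ℝ × ℝ) :=
  (ContinuousLinearMap.fst ℝ ℝ ℝ + ContinuousLinearMap.snd ℝ ℝ ℝ).prod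
    (ContinuousLinearMap.fst ℝ ℝ ℝ - ContinuousLinearMap.snd ℝ ℝ ℝ)

lemma Lmap_apply (p : ℝ × ℝ) : Lmap p = (p.1 + p.2, p.1 - p.2) := rfl

lemma Lmap_det : Lmap.det = -2 := by
  have h : Lmap.det = LinearMap.det (Lmap : (ℝ×ℝ) →ₗ[ℝ] (ℝ×ℝ)) := rfl
  rw [h, ← LinearMap.det_toMatrix (Module.Basis.finTwoProd ℝ), Matrix.det_fin_two]
  simp only [LinearMap.toMatrix_apply, Module.Basis.finTwoProd_zero, Module.Basis.finTwoProd_one,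
    Module.Basis.coe_finTwoProd_repr]
  norm_num [Lmap]

section Main

variable {x τ : ℝ}

lemma integrable_gker (hx : 0 < x) :
    Integrable (fun p : ℝ × ℝ => Real.exp (-(2*x) * (Real.cosh p.1 * Real.cosh p.2)) *
      Real.cos ((2*τ) * p.2)) := by
  have hD : Integrable (fun p : ℝ × ℝ => Real.exp (-x * Real.cosh p.1) *
      Real.exp (-x * Real.cosh p.2)) := by
    rw [MeasureTheory.Measure.volume_eq_prod]
    exact (integrable_exp_neg_cosh hx).mul_prod (integrable_exp_neg_cosh hx)
  apply hD.mono
  · apply Continuous.aestronglyMeasurable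
    exact (Real.continuous_exp.comp (continuous_const.mul
        ((Real.continuous_cosh.comp continuous_fst).mul
          (Real.continuous_cosh.comp continuous_snd)))).mul
      (Real.continuous_cos.comp (continuous_const.mul continuous_snd))
  · refine Filter.Eventually.of_forall fun p => ?_
    simp only [Real.norm_eq_abs, abs_mul, Real.abs_exp]
    calc Real.exp (-(2*x) * (Real.cosh p.1 * Real.cosh p.2)) * |Real.cos ((2*τ) * p.2)|
        ≤ Real.exp (-(2*x) * (Real.cosh p.1 * Real.cosh p.2)) * 1 := by
          gcongr; exact Real.abs_cos_le_one _
      _ ≤ Real.exp (-x * Real.cosh p.1) * Real.exp (-x * Real.cosh p.2) := by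
          rw [mul_one, ← Real.exp_add]
          apply Real.exp_le_exp.2
          nlinarith [Real.one_le_cosh p.1, Real.one_le_cosh p.2, hx,
            mul_nonneg (mul_nonneg hx.le (sub_nonneg.2 (Real.one_le_cosh p.1)))
              (sub_nonneg.2 (Real.one_le_cosh p.2)),
            mul_nonneg (sub_nonneg.2 (Real.one_le_cosh p.1))
              (sub_nonneg.2 (Real.one_le_cosh p.2))]

lemma key (hx : 0 < x) :
    Kit τ x ^ 2 = 2 * ∫ u in Set.Ioi (0:ℝ), Kit (2*τ) (2*x*Real.cosh u) := by
  set f : ℝ → ℝ := fun t => Real.exp (-x * Real.cosh t) * Real.cos (τ * t) with hf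
  set g : ℝ × ℝ → ℝ := fun p => Real.exp (-(2*x) * (Real.cosh p.1 * Real.cosh p.2)) *
    Real.cos ((2*τ) * p.2) with hg
  have hgi : Integrable g := integrable_gker hx
  have hgeven2 : ∀ p : ℝ × ℝ, g (p.1, -p.2) = g p := by
    intro p; simp only [hg, Real.cosh_neg, mul_neg, Real.cos_neg]
  have hgeven1 : ∀ p : ℝ × ℝ, g (-p.1, p.2) = g p := by
    intro p; simp only [hg, Real.cosh_neg]
  -- sets
  set T : Set (ℝ × ℝ) := {p | |p.2| < p.1} with hT
  set T' : Set (ℝ × ℝ) := {p | |p.1| < p.2} with hT'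
  set A : Set (ℝ × ℝ) := {p | 0 < p.2 ∧ p.2 < p.1} with hA
  set B : Set (ℝ × ℝ) := {p | -p.1 < p.2 ∧ p.2 < 0} with hB
  set A' : Set (ℝ × ℝ) := {p | 0 < p.1 ∧ p.1 < p.2} with hA'
  set B' : Set (ℝ × ℝ) := {p | -p.2 < p.1 ∧ p.1 < 0} with hB'
  have hTm : MeasurableSet T := measurableSet_lt (measurable_snd.abs) measurable_fst
  have hAm : MeasurableSet A :=
    (measurableSet_lt measurable_const measurable_snd).inter
      (measurableSet_lt measurable_snd measurable_fst)
  have hBm : MeasurableSet B :=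
    (measurableSet_lt (measurable_fst.neg) measurable_snd).inter
      (measurableSet_lt measurable_snd measurable_const)
  have hA'm : MeasurableSet A' :=
    (measurableSet_lt measurable_const measurable_fst).inter
      (measurableSet_lt measurable_fst measurable_snd)
  have hB'm : MeasurableSet B' :=
    (measurableSet_lt (measurable_snd.neg) measurable_fst).inter
      (measurableSet_lt measurable_fst measurable_const)
  -- null sets
  have hnull2 : (volume : Measure (ℝ × ℝ)) {p | p.2 = 0} = 0 := by
    have : {p : ℝ × ℝ | p.2 = 0} = (Set.univ : Set ℝ) ×ˢ ({0} : Set ℝ) := by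
      ext ⟨a, b⟩; simp [Set.mem_prod, Set.mem_setOf_eq, eq_comm]
    rw [this, MeasureTheory.Measure.volume_eq_prod, MeasureTheory.Measure.prod_prod]
    simp
  have hnull1 : (volume : Measure (ℝ × ℝ)) {p | p.1 = 0} = 0 := by
    have : {p : ℝ × ℝ | p.1 = 0} = ({0} : Set ℝ) ×ˢ (Set.univ : Set ℝ) := by
      ext ⟨a, b⟩; simp [Set.mem_prod, Set.mem_setOf_eq, eq_comm]
    rw [this, MeasureTheory.Measure.volume_eq_prod, MeasureTheory.Measure.prod_prod]
    simp
  have hnullD : (volume : Measure (ℝ × ℝ)) {p : ℝ × ℝ | p.1 = p.2} = 0 := by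
    have hm : MeasurableSet {p : ℝ × ℝ | p.1 = p.2} :=
      measurableSet_eq_fun measurable_fst measurable_snd
    rw [MeasureTheory.Measure.volume_eq_prod, MeasureTheory.Measure.prod_apply hm]
    have : ∀ a : ℝ, (volume : Measure ℝ) (Prod.mk a ⁻¹' {p : ℝ × ℝ | p.1 = p.2}) = 0 := by
      intro a
      have : (Prod.mk a ⁻¹' {p : ℝ × ℝ | p.1 = p.2}) = {a} := by ext b; simp [eq_comm]
      rw [this]; simp
    simp only [this]
    simp
  -- step 1 : square as double integral
  have step1 : Kit τ x ^ 2 = ∫ p in (Set.Ioi (0:ℝ)) ×ˢ (Set.Ioi (0:ℝ)), f p.1 * f p.2 := by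
    have hKit : Kit τ x = ∫ t in Set.Ioi (0:ℝ), f t := rfl
    rw [pow_two, hKit, Measure.volume_eq_prod, ← MeasureTheory.Measure.prod_restrict,
      MeasureTheory.integral_prod_mul]
  -- step 2 : 2D change of variables
  have hfun : ⇑Lmap = fun p : ℝ × ℝ => (p.1 + p.2, p.1 - p.2) := funext Lmap_apply
  have himg : (fun p : ℝ × ℝ => (p.1 + p.2, p.1 - p.2)) '' T
      = (Set.Ioi (0:ℝ)) ×ˢ (Set.Ioi (0:ℝ)) := by
    ext p
    constructor
    · rintro ⟨q, hq, rfl⟩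
      have h := abs_lt.1 (Set.mem_setOf.1 hq)
      simp only [Set.mem_prod, Set.mem_Ioi]
      exact ⟨by linarith [h.1, h.2], by linarith [h.1, h.2]⟩
    · rintro ⟨h1, h2⟩
      simp only [Set.mem_Ioi] at h1 h2
      refine ⟨((p.1 + p.2)/2, (p.1 - p.2)/2), ?_, ?_⟩
      · simp only [hT, Set.mem_setOf_eq]
        exact abs_lt.2 ⟨by linarith, by linarith⟩
      · exact Prod.ext (by ring) (by ring)
  have step2 : (∫ p in (Set.Ioi (0:ℝ)) ×ˢ (Set.Ioi (0:ℝ)), f p.1 * f p.2)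
      = ∫ p in T, |Lmap.det| • (f (p.1 + p.2) * f (p.1 - p.2)) := by
    rw [← himg]
    exact MeasureTheory.integral_image_eq_integral_abs_det_fderiv_smul volume hTm
      (fun p _ => by rw [← hfun]; exact Lmap.hasFDerivAt.hasFDerivWithinAt)
      (fun p _ q _ h => by
        simp only [Prod.mk.injEq] at h
        exact Prod.ext (by linarith [h.1, h.2]) (by linarith [h.1, h.2]))
      (fun p => f p.1 * f p.2)
  -- step 3 : pointwise identity
  have step3 : ∀ p : ℝ × ℝ, |Lmap.det| • (f (p.1 + p.2) * f (p.1 - p.2)) = g p + g p.swap := by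
    intro p
    obtain ⟨u, v⟩ := p
    rw [Lmap_det]
    simp only [hf, hg, smul_eq_mul, Prod.swap_prod_mk]
    have hexp : Real.exp (-x * Real.cosh (u + v)) * Real.exp (-x * Real.cosh (u - v))
        = Real.exp (-(2*x) * (Real.cosh u * Real.cosh v)) := by
      rw [← Real.exp_add, Real.cosh_add, Real.cosh_sub]
      ring_nf
    have htrig : 2 * (Real.cos (τ * (u + v)) * Real.cos (τ * (u - v)))
        = Real.cos ((2*τ) * v) + Real.cos ((2*τ) * u) := by
      have h1 : τ * (u + v) = τ*u + τ*v := by ring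
      have h2 : τ * (u - v) = τ*u - τ*v := by ring
      have h3 : (2*τ) * v = 2 * (τ*v) := by ring
      have h4 : (2*τ) * u = 2 * (τ*u) := by ring
      rw [h1, h2, h3, h4, Real.cos_add, Real.cos_sub, Real.cos_two_mul, Real.cos_two_mul]
      have ha := Real.sin_sq_add_cos_sq (τ*u)
      have hb := Real.sin_sq_add_cos_sq (τ*v)
      nlinarith [ha, hb]
    calc |(-2:ℝ)| * (Real.exp (-x * Real.cosh (u+v)) * Real.cos (τ * (u+v)) *
          (Real.exp (-x * Real.cosh (u-v)) * Real.cos (τ * (u-v))))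
        = (Real.exp (-x * Real.cosh (u+v)) * Real.exp (-x * Real.cosh (u-v))) *
          (2 * (Real.cos (τ * (u+v)) * Real.cos (τ * (u-v)))) := by
          rw [abs_neg, abs_two]; ring
      _ = Real.exp (-(2*x) * (Real.cosh u * Real.cosh v)) *
          (Real.cos ((2*τ) * v) + Real.cos ((2*τ) * u)) := by rw [hexp, htrig]
      _ = _ := by ring
  -- swap machinery
  have hmps : MeasurePreserving (Prod.swap : ℝ × ℝ → ℝ × ℝ) volume volume := by
    rw [Measure.volume_eq_prod]
    exact Measure.measurePreserving_swap
  have hembs : MeasurableEmbedding (Prod.swap : ℝ × ℝ → ℝ × ℝ) :=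
    MeasurableEquiv.prodComm.measurableEmbedding
  have hgswapi : Integrable (fun p : ℝ × ℝ => g p.swap) :=
    (hmps.integrable_comp_emb hembs).2 hgi
  have step23 : Kit τ x ^ 2 = ∫ p in T, (g p + g p.swap) := by
    rw [step1, step2]
    exact MeasureTheory.integral_congr_ae (Filter.Eventually.of_forall
      (fun p => step3 p)) |>.symm ▸ rfl
  have step4 : (∫ p in T, (g p + g p.swap)) = (∫ p in T, g p) + ∫ p in T, g p.swap :=
    MeasureTheory.integral_add hgi.integrableOn hgswapi.integrableOn
  have hswapT : Prod.swap '' T = T' := by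
    ext p
    rw [Set.image_swap_eq_preimage_swap]
    simp [hT, hT', Set.mem_preimage]
  have step5 : (∫ p in T, g p.swap) = ∫ p in T', g p := by
    have h := hmps.setIntegral_image_emb hembs g T
    rw [hswapT] at h
    exact h.symm
  -- reflection in second coordinate
  have refl2 : (∫ p in B, g p) = ∫ p in A, g p := by
    have hmp2 : MeasurePreserving (Prod.map (id : ℝ → ℝ) (Neg.neg : ℝ → ℝ)) volume volume := by
      rw [Measure.volume_eq_prod]
      exact (MeasurePreserving.id volume).prod (Measure.measurePreserving_neg volume)
    have hemb2 : MeasurableEmbedding (Prod.map (id : ℝ → ℝ) (Neg.neg : ℝ → ℝ)) :=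
      MeasurableEmbedding.id.prodMap (Homeomorph.neg ℝ).measurableEmbedding
    have him : (Prod.map (id : ℝ → ℝ) (Neg.neg : ℝ → ℝ)) '' A = B := by
      ext p
      constructor
      · rintro ⟨⟨u, v⟩, ⟨h1, h2⟩, rfl⟩
        exact ⟨by simp [Prod.map]; linarith, by simp [Prod.map]; linarith⟩
      · rintro ⟨h1, h2⟩
        refine ⟨(p.1, -p.2), ⟨by simp; linarith, by simp; linarith⟩, ?_⟩
        simp [Prod.map]
    have h := hmp2.setIntegral_image_emb hemb2 g A
    rw [him] at h
    rw [h]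
    refine MeasureTheory.setIntegral_congr_fun hAm fun p _ => ?_
    show g (Prod.map id Neg.neg p) = g p
    have : Prod.map (id : ℝ → ℝ) (Neg.neg : ℝ → ℝ) p = (p.1, -p.2) := rfl
    rw [this, hgeven2]
  -- reflection in first coordinate
  have refl1 : (∫ p in B', g p) = ∫ p in A', g p := by
    have hmp1 : MeasurePreserving (Prod.map (Neg.neg : ℝ → ℝ) (id : ℝ → ℝ)) volume volume := by
      rw [Measure.volume_eq_prod]
      exact (Measure.measurePreserving_neg volume).prod (MeasurePreserving.id volume)
    have hemb1 : MeasurableEmbedding (Prod.map (Neg.neg : ℝ → ℝ) (id : ℝ → ℝ)) :=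
      (Homeomorph.neg ℝ).measurableEmbedding.prodMap MeasurableEmbedding.id
    have him : (Prod.map (Neg.neg : ℝ → ℝ) (id : ℝ → ℝ)) '' A' = B' := by
      ext p
      constructor
      · rintro ⟨⟨u, v⟩, ⟨h1, h2⟩, rfl⟩
        exact ⟨by simp [Prod.map]; linarith, by simp [Prod.map]; linarith⟩
      · rintro ⟨h1, h2⟩
        refine ⟨(-p.1, p.2), ⟨by simp; linarith, by simp; linarith⟩, ?_⟩
        simp [Prod.map]
    have h := hmp1.setIntegral_image_emb hemb1 g A'
    rw [him] at h
    rw [h]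
    refine MeasureTheory.setIntegral_congr_fun hA'm fun p _ => ?_
    show g (Prod.map Neg.neg id p) = g p
    have : Prod.map (Neg.neg : ℝ → ℝ) (id : ℝ → ℝ) p = (-p.1, p.2) := rfl
    rw [this, hgeven1]
  -- T decomposition
  have hTA : (∫ p in T, g p) = 2 * ∫ p in A, g p := by
    have hae : T =ᵐ[(volume : Measure (ℝ × ℝ))] ((A ∪ B : Set (ℝ × ℝ)) : Set (ℝ × ℝ)) := by
      rw [MeasureTheory.ae_eq_set]
      constructor
      · apply measure_mono_null _ hnull2
        rintro ⟨u, v⟩ ⟨hmemT, hmemAB⟩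
        simp only [hT, hA, hB, Set.mem_setOf_eq, Set.mem_union, not_or, not_and, not_lt] at hmemT hmemAB
        have h1 := abs_lt.1 hmemT
        by_contra hne
        rcases lt_or_gt_of_ne hne with hneg | hpos
        · exact absurd (hmemAB.2 (by linarith [h1.1])) (not_le.2 hneg)
        · exact absurd (hmemAB.1 hpos) (not_le.2 h1.2)
      · have : (A ∪ B) \ T = ∅ := by
          apply Set.diff_eq_empty.2
          rintro ⟨u, v⟩ (⟨h1, h2⟩ | ⟨h1, h2⟩) <;>
            · simp only [hT, Set.mem_setOf_eq]
              rw [abs_lt]; constructor <;> linarith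
        rw [this]; simp
    have hdisj : Disjoint A B := by
      rw [Set.disjoint_left]
      rintro p ⟨h1, _⟩ ⟨_, h4⟩
      linarith
    rw [MeasureTheory.setIntegral_congr_set hae,
      MeasureTheory.setIntegral_union hdisj hBm hgi.integrableOn hgi.integrableOn, refl2]
    ring
  have hTA' : (∫ p in T', g p) = 2 * ∫ p in A', g p := by
    have hae : T' =ᵐ[(volume : Measure (ℝ × ℝ))] ((A' ∪ B' : Set (ℝ × ℝ)) : Set (ℝ × ℝ)) := by
      rw [MeasureTheory.ae_eq_set]
      constructor
      · apply measure_mono_null _ hnull1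
        rintro ⟨u, v⟩ ⟨hmemT, hmemAB⟩
        simp only [hT', hA', hB', Set.mem_setOf_eq, Set.mem_union, not_or, not_and, not_lt] at hmemT hmemAB
        have h1 := abs_lt.1 hmemT
        by_contra hne
        rcases lt_or_gt_of_ne hne with hneg | hpos
        · exact absurd (hmemAB.2 (by linarith [h1.1])) (not_le.2 hneg)
        · exact absurd (hmemAB.1 hpos) (not_le.2 h1.2)
      · have : (A' ∪ B') \ T' = ∅ := by
          apply Set.diff_eq_empty.2
          rintro ⟨u, v⟩ (⟨h1, h2⟩ | ⟨h1, h2⟩) <;>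
            · simp only [hT', Set.mem_setOf_eq]
              rw [abs_lt]; constructor <;> linarith
        rw [this]; simp
    have hdisj : Disjoint A' B' := by
      rw [Set.disjoint_left]
      rintro p ⟨h1, _⟩ ⟨_, h4⟩
      linarith
    rw [MeasureTheory.setIntegral_congr_set hae,
      MeasureTheory.setIntegral_union hdisj hB'm hgi.integrableOn hgi.integrableOn, refl1]
    ring
  -- combining A and A'
  have hAA' : (∫ p in A, g p) + (∫ p in A', g p) = ∫ p in (Set.Ioi (0:ℝ)) ×ˢ (Set.Ioi (0:ℝ)), g p := by
    have hdisj : Disjoint A A' := by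
      rw [Set.disjoint_left]
      rintro p ⟨h1, h2⟩ ⟨h3, h4⟩
      linarith
    rw [← MeasureTheory.setIntegral_union hdisj hA'm hgi.integrableOn hgi.integrableOn]
    apply MeasureTheory.setIntegral_congr_set
    rw [MeasureTheory.ae_eq_set]
    constructor
    · have : (A ∪ A') \ ((Set.Ioi (0:ℝ)) ×ˢ (Set.Ioi (0:ℝ))) = ∅ := by
        apply Set.diff_eq_empty.2
        rintro ⟨u, v⟩ (⟨h1, h2⟩ | ⟨h1, h2⟩) <;>
          exact ⟨by simp; linarith, by simp; linarith⟩
      rw [this]; simp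
    · apply measure_mono_null _ hnullD
      rintro ⟨u, v⟩ ⟨hmem, hmemAA⟩
      simp only [Set.mem_prod, Set.mem_Ioi] at hmem
      simp only [hA, hA', Set.mem_setOf_eq, Set.mem_union, not_or, not_and, not_lt] at hmemAA
      simp only [Set.mem_setOf_eq]
      exact le_antisymm (hmemAA.1 hmem.2) (hmemAA.2 hmem.1)
  -- Fubini and recognition of Kit
  have step8 : (∫ p in (Set.Ioi (0:ℝ)) ×ˢ (Set.Ioi (0:ℝ)), g p)
      = ∫ u in Set.Ioi (0:ℝ), Kit (2*τ) (2*x*Real.cosh u) := by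
    rw [Measure.volume_eq_prod, ← MeasureTheory.Measure.prod_restrict,
      MeasureTheory.integral_prod]
    · refine MeasureTheory.setIntegral_congr_fun measurableSet_Ioi fun u _ => ?_
      have hfun2 : (fun v => g (u, v))
          = fun v => Real.exp (-(2*x*Real.cosh u) * Real.cosh v) * Real.cos ((2*τ) * v) := by
        funext v
        simp only [hg]
        congr 2
        ring
      rw [hfun2]
      rfl
    · rw [MeasureTheory.Measure.prod_restrict]
      exact hgi.integrableOn
  calc Kit τ x ^ 2 = ∫ p in T, (g p + g p.swap) := step23
    _ = (∫ p in T, g p) + ∫ p in T, g p.swap := step4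
    _ = (∫ p in T, g p) + ∫ p in T', g p := by rw [step5]
    _ = 2 * (∫ p in A, g p) + 2 * ∫ p in A', g p := by rw [hTA, hTA']
    _ = 2 * ((∫ p in A, g p) + ∫ p in A', g p) := by ring
    _ = 2 * ∫ p in (Set.Ioi (0:ℝ)) ×ˢ (Set.Ioi (0:ℝ)), g p := by rw [hAA']
    _ = 2 * ∫ u in Set.Ioi (0:ℝ), Kit (2*τ) (2*x*Real.cosh u) := by rw [step8]

end Main

theorem stmt7 (x τ : ℝ) (hx : 0 < x) (hτ : 0 < τ) :
    (Kit τ x) ^ 2 = 2 * ∫ y in Set.Ioi (1:ℝ), Kit (2 * τ) (2 * x * y) / Real.sqrt (y^2 - 1) := by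
  rw [key hx]
  congr 1
  have h := integral_image_eq_integral_abs_deriv_smul (s := Set.Ioi (0:ℝ))
    (f := Real.cosh) (f' := Real.sinh) measurableSet_Ioi
    (fun u _ => (Real.hasDerivAt_cosh u).hasDerivWithinAt)
    (Real.cosh_strictMonoOn.injOn.mono Set.Ioi_subset_Ici_self)
    (fun y => Kit (2 * τ) (2 * x * y) / Real.sqrt (y^2 - 1))
  rw [cosh_image] at h
  rw [h]
  refine MeasureTheory.setIntegral_congr_fun measurableSet_Ioi fun u hu => ?_
  have hu0 : (0:ℝ) < u := hu
  have hs : 0 < Real.sinh u := Real.sinh_pos_iff.2 hu0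
  have hsq : Real.sqrt (Real.cosh u ^ 2 - 1) = Real.sinh u := by
    rw [Real.cosh_sq, show Real.sinh u ^ 2 + 1 - 1 = Real.sinh u ^ 2 by ring,
      Real.sqrt_sq hs.le]
  show Kit (2 * τ) (2 * x * Real.cosh u)
      = |Real.sinh u| • (Kit (2 * τ) (2 * x * Real.cosh u) / Real.sqrt (Real.cosh u ^ 2 - 1))
  rw [smul_eq_mul, abs_of_pos hs, hsq]
  field_simp
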